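/- Let n ≥ 1 be an integer, m > 0, k > 0, and let u: ℝⁿ → ℝ be three times continuously differentiable and satisfy Δu(x) = u(x) − 2m |u(x)|^{2k} u(x) for all x ∈ ℝⁿ. Define w(x) = (1/k) u(x) + x·∇u(x). Then for all x ∈ ℝⁿ one has (1/(2m)) w(x) − (1/(2m)) Δw(x) − (1+2k) |u(x)|^{2k} w(x) = −(1/m) u(x). -/

import Mathlib

open Filter

section Aux
variable {E F : Type*} [NormedAddCommGroup E] [NormedSpace ℝ E]
  [NormedAddCommGroup F] [NormedSpace ℝ F]

lemma fda {g : E → (E →L[ℝ] F)} {x : E} (hg : DifferentiableAt ℝ g x) (a : E) :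
    fderiv ℝ (fun y => g y a) x = (fderiv ℝ g x).flip a := by
  rw [fderiv_clm_apply hg (differentiableAt_const a)]
  ext v
  simp

lemma fda2 {g : E → (E →L[ℝ] (E →L[ℝ] F))} {x : E} (hg : DifferentiableAt ℝ g x)
    (a b v : E) :
    fderiv ℝ (fun y => g y a b) x v = fderiv ℝ g x v a b := by
  have h1 : DifferentiableAt ℝ (fun y => g y a) x := hg.clm_apply (differentiableAt_const a)
  rw [fda h1 b, fda hg a]
  simp

lemma schwarz {f : E → F} (hf : ContDiff ℝ 2 f) (x v w : E) :
    fderiv ℝ (fun y => fderiv ℝ f y w) x v = fderiv ℝ (fun y => fderiv ℝ f y v) x w := by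
  have hd : DifferentiableAt ℝ (fderiv ℝ f) x :=
    ((hf.fderiv_right (m := 1) (by norm_num)).differentiable (by norm_num)).differentiableAt
  rw [fda hd w, fda hd v]
  simpa using (hf.contDiffAt.isSymmSndFDerivAt (by norm_num)).eq v w

end Aux

lemma phi_deriv {k : ℝ} (hk : 0 < k) (t : ℝ) :
    HasDerivAt (fun s : ℝ => |s| ^ (2 * k) * s) ((1 + 2 * k) * |t| ^ (2 * k)) t := by
  have habs : ∀ s : ℝ, |s| ^ (2*k) = (s ^ 2) ^ k := by
    intro s
    rw [mul_comm 2 k, mul_comm k 2, Real.rpow_mul (abs_nonneg s),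
      Real.rpow_two, sq_abs]
  have hfun : (fun s : ℝ => |s| ^ (2*k) * s) = fun s : ℝ => (s^2)^k * s := by
    funext s; rw [habs]
  rw [hfun, habs]
  rcases eq_or_ne t 0 with rfl | ht
  · have h00 : (1 + 2*k) * ((0:ℝ)^2)^k = 0 := by
      rw [zero_pow (by norm_num), Real.zero_rpow (ne_of_gt hk), mul_zero]
    rw [h00, hasDerivAt_iff_tendsto_slope]
    have hcont : Tendsto (fun s : ℝ => (s^2)^k) (nhdsWithin 0 {(0:ℝ)}ᶜ) (nhds 0) := by
      have hc : ContinuousAt (fun s : ℝ => (s^2)^k) 0 := by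
        apply ContinuousAt.rpow_const (by fun_prop)
        right; exact le_of_lt hk
      have h0 : ((0:ℝ)^2)^k = 0 := by
        rw [zero_pow (by norm_num), Real.zero_rpow (ne_of_gt hk)]
      exact (h0 ▸ hc.tendsto).mono_left nhdsWithin_le_nhds
    refine Filter.Tendsto.congr' ?_ hcont
    filter_upwards [self_mem_nhdsWithin] with s hs
    simp only [Set.mem_compl_iff, Set.mem_singleton_iff] at hs
    rw [slope_def_field]
    rw [zero_pow (by norm_num), Real.zero_rpow (ne_of_gt hk)]
    field_simp
    ring
  · have h2 : (0:ℝ) < t^2 := by positivity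
    have hpow : HasDerivAt (fun s : ℝ => s^2) ((2:ℕ) * t ^ (2-1)) t := hasDerivAt_pow 2 t
    have hcomp : HasDerivAt (fun s : ℝ => (s^2)^k) (((2:ℕ) * t ^ (2-1)) * k * (t^2) ^ (k-1)) t :=
      hpow.rpow_const (Or.inl (ne_of_gt h2))
    have hmul : HasDerivAt (fun s : ℝ => (s^2)^k * s)
        (((2:ℕ) * t ^ (2-1)) * k * (t^2) ^ (k-1) * t + (t^2)^k * 1) t := hcomp.mul (hasDerivAt_id t)
    convert hmul using 1
    have hsub : (t^2)^(k-1) = (t^2)^k / t^2 := by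
      rw [Real.rpow_sub h2, Real.rpow_one]
    simp only [Function.comp, hsub, id_eq]
    field_simp
    ring



/-- The Laplacian of a function on `ℝⁿ` (modelled as `EuclideanSpace ℝ (Fin n)`),
as the sum of the second derivatives in the coordinate directions. -/
noncomputable def laplacian {n : ℕ} (u : EuclideanSpace ℝ (Fin n) → ℝ)
    (x : EuclideanSpace ℝ (Fin n)) : ℝ :=
  ∑ i : Fin n, fderiv ℝ (fun y => fderiv ℝ u y (EuclideanSpace.single i 1)) x
    (EuclideanSpace.single i 1)

/-- the identity `ℓ₊((1/k)u + x·∇u) = −(1/m)u`: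
if `u` is `C³` and satisfies `Δu = u − 2m|u|^{2k}u`, then
`w = (1/k)u + x·∇u` satisfies `(1/(2m))w − (1/(2m))Δw − (1+2k)|u|^{2k}w = −(1/m)u`.
Here `x·∇u(x)` is the directional derivative `fderiv ℝ u x x`. -/
theorem stmt11 (n : ℕ) (hn : 1 ≤ n) (m k : ℝ) (hm : 0 < m) (hk : 0 < k)
    (u : EuclideanSpace ℝ (Fin n) → ℝ) (hu : ContDiff ℝ 3 u)
    (heq : ∀ x, laplacian u x = u x - 2 * m * |u x| ^ (2 * k) * u x) :
    ∀ x, 1 / (2 * m) * (1 / k * u x + fderiv ℝ u x x)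
        - 1 / (2 * m) * laplacian (fun y => 1 / k * u y + fderiv ℝ u y y) x
        - (1 + 2 * k) * |u x| ^ (2 * k) * (1 / k * u x + fderiv ℝ u x x)
      = -(1 / m) * u x := by
  intro x
  -- smoothness facts
  have hC2 : ContDiff ℝ 2 (fderiv ℝ u) := hu.fderiv_right (m := 2) (by norm_num)
  have hC1 : ContDiff ℝ 1 (fderiv ℝ (fderiv ℝ u)) := hC2.fderiv_right (m := 1) (by norm_num)
  have hud : Differentiable ℝ u := hu.differentiable (by norm_num)
  have hF1d : Differentiable ℝ (fderiv ℝ u) := hC2.differentiable (by norm_num)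
  have hF2d : Differentiable ℝ (fderiv ℝ (fderiv ℝ u)) := hC1.differentiable (by norm_num)
  have hF1a : ∀ a : EuclideanSpace ℝ (Fin n), Differentiable ℝ (fun y => fderiv ℝ u y a) :=
    fun a => hF1d.clm_apply (differentiable_const a)
  have hF2a : ∀ a : EuclideanSpace ℝ (Fin n), Differentiable ℝ (fun y => fderiv ℝ (fderiv ℝ u) y a) :=
    fun a => hF2d.clm_apply (differentiable_const a)
  have hF2ab : ∀ a b : EuclideanSpace ℝ (Fin n), Differentiable ℝ (fun y => fderiv ℝ (fderiv ℝ u) y a b) :=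
    fun a b => (hF2a a).clm_apply (differentiable_const b)
  -- symmetry of the second derivative (pointwise everywhere)
  have sym2 : ∀ (y a b : EuclideanSpace ℝ (Fin n)), fderiv ℝ (fderiv ℝ u) y a b = fderiv ℝ (fderiv ℝ u) y b a :=
    fun y a b => (hu.contDiffAt.isSymmSndFDerivAt (by norm_num)).eq a b
  -- symmetry of third derivative, swap last two args
  have sym23 : ∀ a b c : EuclideanSpace ℝ (Fin n), fderiv ℝ (fderiv ℝ (fderiv ℝ u)) x a b c
      = fderiv ℝ (fderiv ℝ (fderiv ℝ u)) x a c b := by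
    intro a b c
    have hfun : (fun y => fderiv ℝ (fderiv ℝ u) y b c)
        = (fun y => fderiv ℝ (fderiv ℝ u) y c b) := funext fun y => sym2 y b c
    rw [← fda2 (hF2d x) b c a, hfun, fda2 (hF2d x) c b a]
  -- symmetry of third derivative, swap first two args
  have sym12 : ∀ a b c : EuclideanSpace ℝ (Fin n), fderiv ℝ (fderiv ℝ (fderiv ℝ u)) x a b c
      = fderiv ℝ (fderiv ℝ (fderiv ℝ u)) x b a c := by
    intro a b c
    have hgC2 : ContDiff ℝ 2 (fun y => fderiv ℝ u y c) :=
      hC2.clm_apply contDiff_const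
    have hg : ∀ (y v : EuclideanSpace ℝ (Fin n)), fderiv ℝ (fun z => fderiv ℝ u z c) y v
        = fderiv ℝ (fderiv ℝ u) y v c := by
      intro y v; rw [fda (hF1d y) c]; simp
    have key : ∀ v w : EuclideanSpace ℝ (Fin n), fderiv ℝ (fun y => fderiv ℝ (fun z => fderiv ℝ u z c) y w) x v
        = fderiv ℝ (fderiv ℝ (fderiv ℝ u)) x v w c := by
      intro v w
      have hfun : (fun y => fderiv ℝ (fun z => fderiv ℝ u z c) y w)
          = fun y => fderiv ℝ (fderiv ℝ u) y w c := funext fun y => hg y w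
      rw [hfun, fda2 (hF2d x) w c v]
    have := schwarz hgC2 x a b
    rw [key a b, key b a] at this
    exact this
  -- the Laplacian via the second derivative bilinear form
  have hLap : ∀ y, laplacian u y = ∑ i : Fin n,
      fderiv ℝ (fderiv ℝ u) y (EuclideanSpace.single i 1) (EuclideanSpace.single i 1) := by
    intro y
    unfold laplacian
    refine Finset.sum_congr rfl fun i _ => ?_
    rw [fda (hF1d y) (EuclideanSpace.single i 1)]
    simp
  -- derivative of y ↦ fderiv u y y
  have hinner : ∀ (y : EuclideanSpace ℝ (Fin n)), fderiv ℝ (fun z => fderiv ℝ u z z) y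
      = (fderiv ℝ u y).comp (ContinuousLinearMap.id ℝ _)
        + (fderiv ℝ (fderiv ℝ u) y).flip y := by
    intro y
    have := fderiv_clm_apply (c := fderiv ℝ u) (u := fun z => z)
      (hF1d y) differentiableAt_fun_id
    rw [fderiv_id'] at this
    exact this
  have hq : ∀ a : EuclideanSpace ℝ (Fin n), Differentiable ℝ (fun y => fderiv ℝ (fderiv ℝ u) y a y) :=
    fun a => (hF2a a).clm_apply differentiable_id
  -- the per-direction second derivative of w
  have key : ∀ a : EuclideanSpace ℝ (Fin n),
      fderiv ℝ (fun y => fderiv ℝ (fun z => 1 / k * u z + fderiv ℝ u z z) y a) x a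
      = 1/k * fderiv ℝ (fderiv ℝ u) x a a
        + (2 * fderiv ℝ (fderiv ℝ u) x a a + fderiv ℝ (fderiv ℝ (fderiv ℝ u)) x a a x) := by
    intro a
    have hwfun : (fun y => fderiv ℝ (fun z => 1 / k * u z + fderiv ℝ u z z) y a)
        = fun y => 1/k * fderiv ℝ u y a + (fderiv ℝ u y a + fderiv ℝ (fderiv ℝ u) y a y) := by
      funext y
      rw [fderiv_fun_add ((hud y).const_mul (1/k)) ((hF1d y).clm_apply differentiableAt_fun_id),
        fderiv_const_mul (hud y), hinner y]
      simp
    rw [hwfun]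
    rw [fderiv_fun_add (((hF1a a).const_mul (1/k)) x)
      (((hF1a a) x).fun_add ((hq a) x))]
    rw [fderiv_fun_add ((hF1a a) x) ((hq a) x)]
    rw [fderiv_const_mul ((hF1a a) x)]
    have h1 : fderiv ℝ (fun y => fderiv ℝ u y a) x a = fderiv ℝ (fderiv ℝ u) x a a := by
      rw [fda (hF1d x) a]; simp
    have h2 : fderiv ℝ (fun y => fderiv ℝ (fderiv ℝ u) y a y) x a
        = fderiv ℝ (fderiv ℝ u) x a a + fderiv ℝ (fderiv ℝ (fderiv ℝ u)) x a a x := by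
      rw [fderiv_clm_apply ((hF2a a) x) differentiableAt_fun_id]
      rw [fda (hF2d x) a, fderiv_id']
      simp
    simp only [ContinuousLinearMap.add_apply, ContinuousLinearMap.smul_apply, h1, h2,
      smul_eq_mul]
    ring
  -- the Laplacian of w
  have lapw : laplacian (fun y => 1 / k * u y + fderiv ℝ u y y) x
      = (1/k) * laplacian u x + 2 * laplacian u x
        + ∑ i : Fin n, fderiv ℝ (fderiv ℝ (fderiv ℝ u)) x (EuclideanSpace.single i 1)
            (EuclideanSpace.single i 1) x := by
    unfold laplacian
    rw [show (∑ i : Fin n, fderiv ℝ (fun y =>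
        fderiv ℝ (fun z => 1 / k * u z + fderiv ℝ u z z) y (EuclideanSpace.single i 1)) x
        (EuclideanSpace.single i 1))
      = ∑ i : Fin n, (1/k * fderiv ℝ (fderiv ℝ u) x (EuclideanSpace.single i 1)
          (EuclideanSpace.single i 1)
        + (2 * fderiv ℝ (fderiv ℝ u) x (EuclideanSpace.single i 1) (EuclideanSpace.single i 1)
          + fderiv ℝ (fderiv ℝ (fderiv ℝ u)) x (EuclideanSpace.single i 1)
            (EuclideanSpace.single i 1) x))
      from Finset.sum_congr rfl fun i _ => key (EuclideanSpace.single i 1)]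
    rw [Finset.sum_add_distrib, Finset.sum_add_distrib, ← Finset.mul_sum, ← Finset.mul_sum]
    have := hLap x
    unfold laplacian at this
    rw [this]
    ring
  -- relate the third-derivative sum to the derivative of the Laplacian
  have hDL : ∑ i : Fin n, fderiv ℝ (fderiv ℝ (fderiv ℝ u)) x (EuclideanSpace.single i 1)
      (EuclideanSpace.single i 1) x = fderiv ℝ (laplacian u) x x := by
    have hlapfun : laplacian u = fun y => ∑ i : Fin n,
        fderiv ℝ (fderiv ℝ u) y (EuclideanSpace.single i 1) (EuclideanSpace.single i 1) :=
      funext hLap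
    rw [hlapfun]
    rw [fderiv_fun_sum (fun i _ => (hF2ab (EuclideanSpace.single i 1) (EuclideanSpace.single i 1) x))]
    rw [ContinuousLinearMap.sum_apply]
    refine Finset.sum_congr rfl fun i _ => ?_
    rw [fda2 (hF2d x) (EuclideanSpace.single i 1) (EuclideanSpace.single i 1) x]
    rw [sym23 (EuclideanSpace.single i 1) (EuclideanSpace.single i 1) x,
      sym12 (EuclideanSpace.single i 1) x (EuclideanSpace.single i 1)]
  -- compute the derivative of the Laplacian from the PDE
  have hlapfun2 : laplacian u = fun y => u y - 2*m*(|u y| ^ (2*k) * u y) := by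
    funext y; rw [heq y]; ring
  have hphi : HasFDerivAt (fun y => |u y| ^ (2*k) * u y)
      (((1 + 2*k) * |u x| ^ (2*k)) • fderiv ℝ u x) x :=
    (phi_deriv hk (u x)).comp_hasFDerivAt x (hud x).hasFDerivAt
  have hrhs : HasFDerivAt (fun y => u y - 2*m*(|u y| ^ (2*k) * u y))
      (fderiv ℝ u x - (2*m) • (((1 + 2*k) * |u x| ^ (2*k)) • fderiv ℝ u x)) x :=
    (hud x).hasFDerivAt.sub (hphi.const_mul (2*m))
  have hDlap : fderiv ℝ (laplacian u) x x
      = fderiv ℝ u x x - 2*m*((1 + 2*k) * |u x| ^ (2*k) * fderiv ℝ u x x) := by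
    rw [hlapfun2, hrhs.fderiv]
    simp only [ContinuousLinearMap.sub_apply, ContinuousLinearMap.smul_apply, smul_eq_mul]
  -- put everything together
  rw [lapw, hDL, hDlap, heq x]
  have hm' : m ≠ 0 := ne_of_gt hm
  have hk' : k ≠ 0 := ne_of_gt hk
  field_simp
  ring
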